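/- For natural numbers b ≥ 0 and 0 ≤ j ≤ 2^b - 1 with 2j ≤ 2^b - 1, the binomial coefficient C(2^b - 1 - j, j) is odd if and only if j = 0. -/

import Mathlib

/-- If some binary digit of `k` is `1` while the corresponding digit of `n` is `0`,
then `C(n, k)` is even (by Lucas's theorem). -/
lemma even_choose_of_bit {n k i : ℕ} (hn : n / 2 ^ i % 2 = 0) (hk : k / 2 ^ i % 2 = 1) :
    Nat.choose n k % 2 = 0 := by
  have : Fact (Nat.Prime 2) := ⟨Nat.prime_two⟩
  set a := n + k + i + 1 with ha
  have hna : n < 2 ^ a := lt_of_le_of_lt (by omega) (Nat.lt_two_pow_self (n := a))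
  have hka : k < 2 ^ a := lt_of_le_of_lt (by omega) (Nat.lt_two_pow_self (n := a))
  have hia : i ∈ Finset.range a := Finset.mem_range.mpr (by omega)
  have hmod := Choose.lucas_theorem_nat (p := 2) hna hka
  have hprod : (∏ x ∈ Finset.range a, Nat.choose (n / 2 ^ x % 2) (k / 2 ^ x % 2)) = 0 :=
    Finset.prod_eq_zero hia (by rw [hn, hk]; rfl)
  rw [hprod] at hmod
  simpa [Nat.ModEq] using hmod

/-- Lucas-theorem computation for Lemma 5.1(d): for `0 ≤ j` with `2j ≤ 2^b - 1`,
`C(2^b - 1 - j, j)` is odd iff `j = 0`. -/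
theorem choose_two_pow_sub_one_odd_iff (b j : ℕ) (h : 2 * j ≤ 2 ^ b - 1) :
    Odd (Nat.choose (2 ^ b - 1 - j) j) ↔ j = 0 := by
  constructor
  · intro hodd
    by_contra hj
    -- write j = 2^i * m with m odd
    obtain ⟨i, m, hm2, hjm⟩ := Nat.exists_eq_pow_mul_and_not_dvd hj 2 (by norm_num)
    have hm1 : m % 2 = 1 := Nat.two_dvd_ne_zero.mp hm2
    have hmpos : 0 < m := by omega
    have hiipow : 2 ^ i ≤ j := by
      calc 2 ^ i = 2 ^ i * 1 := by ring
        _ ≤ 2 ^ i * m := Nat.mul_le_mul_left _ hmpos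
        _ = j := hjm.symm
    have hpowpos : 0 < 2 ^ b := Nat.pow_pos (n := b) (by norm_num)
    have hib : i + 1 ≤ b := by
      have h1 : 2 ^ (i + 1) < 2 ^ b := by
        have : 2 ^ (i + 1) = 2 * 2 ^ i := by ring
        omega
      exact Nat.le_of_lt_succ (Nat.lt_succ_of_lt ((Nat.pow_lt_pow_iff_right (by norm_num)).mp h1))
    have hPQ : 2 ^ i * 2 ^ (b - i) = 2 ^ b := by
      rw [← pow_add]; congr 1; omega
    have hmQ : m < 2 ^ (b - i) := by
      have hjlt : 2 ^ i * m < 2 ^ i * 2 ^ (b - i) := by rw [hPQ]; omega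
      exact lt_of_mul_lt_mul_left hjlt (Nat.zero_le _)
    -- the digit of j at position i is 1
    have hkdig : j / 2 ^ i % 2 = 1 := by
      rw [hjm, Nat.mul_div_cancel_left _ (Nat.pow_pos (n := i) (by norm_num))]
      exact hm1
    -- the digit of n = 2^b - 1 - j at position i is 0
    have hQeven : 2 ^ (b - i) % 2 = 0 := by
      have hb1 : b - i = (b - i - 1) + 1 := by omega
      rw [hb1, pow_succ]
      omega
    set q := 2 ^ (b - i) - (m + 1) with hq
    have hmulsub : 2 ^ i * q = 2 ^ b - j - 2 ^ i := by
      rw [hq, Nat.mul_sub, hPQ, Nat.mul_add, ← hjm]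
      have : 2 ^ i ≤ 2 ^ b := Nat.pow_le_pow_right (by norm_num) (by omega)
      omega
    have hn_eq : 2 ^ b - 1 - j = 2 ^ i * q + (2 ^ i - 1) := by
      have h2i : 0 < 2 ^ i := Nat.pow_pos (n := i) (by norm_num)
      have hj2 : j + 2 ^ i ≤ 2 ^ b := by omega
      omega
    have hndig : (2 ^ b - 1 - j) / 2 ^ i % 2 = 0 := by
      rw [hn_eq, Nat.mul_add_div (Nat.pow_pos (n := i) (by norm_num)),
        Nat.div_eq_of_lt (by omega), Nat.add_zero]
      omega
    have := even_choose_of_bit hndig hkdig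
    rw [Nat.odd_iff] at hodd
    omega
  · rintro rfl
    simp
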